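/- The function pack satisfies the Euclidean bound: for every n ≥ 1 and every bounded Borel subset C of ℝ^n, pack(C) ≥ δ_{pack,n} · L_n(C), where L_n is Lebesgue measure on ℝ^n and δ_{pack,n} is the limit as k → ∞ of pack(2^k·[0,1]^n)/2^{kn}. -/

import Mathlib

open scoped Pointwise
open MeasureTheory Bornology Filter
open scoped ENNReal

/-- The unit cube `[0,1]^n` in `ℝ^n`. -/
def unitCube (n : ℕ) : Set (EuclideanSpace ℝ (Fin n)) :=
  {x | ∀ i, x i ∈ Set.Icc (0 : ℝ) 1}

/-- `pack C` is the largest cardinality of a subset of `C` with pairwise distances at least 2. -/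
noncomputable def pack (d : ℕ) (C : Set (EuclideanSpace ℝ (Fin d))) : ℕ :=
  sSup {m : ℕ | ∃ X : Finset (EuclideanSpace ℝ (Fin d)),
    ↑X ⊆ C ∧ (∀ x ∈ X, ∀ y ∈ X, x ≠ y → 2 ≤ dist x y) ∧ X.card = m}

/-- `δ_{pack,n}`: the limit of `pack(2^k·[0,1]^n)/2^{kn}` (expressed as a `limsup`, which
coincides with the limit since the latter exists). -/
noncomputable def packDensity (n : ℕ) : ℝ :=
  Filter.limsup (fun k : ℕ => (pack n ((2 : ℝ) ^ k • unitCube n) : ℝ) / 2 ^ (k * n))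
    Filter.atTop

namespace PackAux

variable {n : ℕ}

def packSet (n : ℕ) (C : Set (EuclideanSpace ℝ (Fin n))) : Set ℕ :=
  {m : ℕ | ∃ X : Finset (EuclideanSpace ℝ (Fin n)),
    ↑X ⊆ C ∧ (∀ x ∈ X, ∀ y ∈ X, x ≠ y → 2 ≤ dist x y) ∧ X.card = m}

lemma pack_def (C : Set (EuclideanSpace ℝ (Fin n))) : pack n C = sSup (packSet n C) := rfl

lemma zero_mem_packSet (C : Set (EuclideanSpace ℝ (Fin n))) : 0 ∈ packSet n C :=
  ⟨∅, by simp, by simp, rfl⟩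

lemma coord_dist_le (x y : EuclideanSpace ℝ (Fin n)) (i : Fin n) :
    dist (x i) (y i) ≤ dist x y := by
  rw [EuclideanSpace.dist_eq]
  refine le_trans ?_ (Real.sqrt_le_sqrt (Finset.single_le_sum
    (f := fun j => dist (x j) (y j) ^ 2) (fun j _ => sq_nonneg _) (Finset.mem_univ i)))
  rw [Real.sqrt_sq dist_nonneg]

lemma bddAbove_packSet {C : Set (EuclideanSpace ℝ (Fin n))} (hC : IsBounded C) :
    BddAbove (packSet n C) := by
  obtain ⟨R, hR⟩ := hC.subset_closedBall 0
  have hcb : TotallyBounded (Metric.closedBall (0 : EuclideanSpace ℝ (Fin n)) R) :=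
    (isCompact_closedBall _ _).totallyBounded
  obtain ⟨t, htf, hcover⟩ := (Metric.totallyBounded_iff).mp hcb (1/2) (by norm_num)
  classical
  refine ⟨htf.toFinset.card, ?_⟩
  rintro m ⟨X, hXC, hsep, rfl⟩
  have hXball : ∀ x ∈ X, ∃ y ∈ htf.toFinset, x ∈ Metric.ball y (1/2) := by
    intro x hx
    have := hcover (hR (hXC hx))
    simp only [Set.mem_iUnion] at this
    obtain ⟨y, hy, hxy⟩ := this
    exact ⟨y, htf.mem_toFinset.mpr hy, hxy⟩
  set f : EuclideanSpace ℝ (Fin n) → EuclideanSpace ℝ (Fin n) := fun x =>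
    if h : ∃ y ∈ htf.toFinset, x ∈ Metric.ball y (1/2) then h.choose else 0
  refine Finset.card_le_card_of_injOn f ?_ ?_
  · intro x hx
    have h := hXball x hx
    simp only [f, dif_pos h]
    exact h.choose_spec.1
  · intro x hx y hy hfxy
    by_contra hne
    have h2 := hsep x hx y hy hne
    have hx' := hXball x hx
    have hy' := hXball y hy
    have hxb : x ∈ Metric.ball (f x) (1/2) := by
      simp only [f, dif_pos hx']; exact hx'.choose_spec.2
    have hyb : y ∈ Metric.ball (f y) (1/2) := by
      simp only [f, dif_pos hy']; exact hy'.choose_spec.2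
    rw [← hfxy] at hyb
    have : dist x y < 1 := by
      calc dist x y ≤ dist x (f x) + dist y (f x) := dist_triangle_right _ _ _
        _ < 1/2 + 1/2 := add_lt_add (Metric.mem_ball.mp hxb) (Metric.mem_ball.mp hyb)
        _ = 1 := by norm_num
    linarith

lemma mem_smul_unitCube {s : ℝ} (hs : 0 < s) {x : EuclideanSpace ℝ (Fin n)}
    (hx : x ∈ s • unitCube n) (i : Fin n) : 0 ≤ x i ∧ x i ≤ s := by
  obtain ⟨a, ha, rfl⟩ := hx
  have h := ha i
  show 0 ≤ s * a i ∧ s * a i ≤ s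
  constructor
  · exact mul_nonneg hs.le h.1
  · nlinarith [h.2]

lemma isBounded_smul_unitCube (s : ℝ) : IsBounded (s • unitCube n) := by
  have h1 : IsBounded (unitCube n) := by
    rw [Metric.isBounded_iff_subset_closedBall 0]
    refine ⟨Real.sqrt n, fun x hx => ?_⟩
    simp only [Metric.mem_closedBall, dist_zero_right]
    rw [EuclideanSpace.norm_eq]
    apply Real.sqrt_le_sqrt
    calc ∑ i, ‖x i‖ ^ 2 ≤ ∑ _i : Fin n, (1:ℝ) := by
          apply Finset.sum_le_sum
          intro i _
          have := hx i
          rw [Real.norm_eq_abs, abs_of_nonneg this.1]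
          nlinarith [this.1, this.2]
      _ = n := by simp
  exact h1.smul₀ s

lemma coordBox_eq (a b : Fin n → ℝ) :
    {x : EuclideanSpace ℝ (Fin n) | ∀ i, x i ∈ Set.Ico (a i) (b i)} =
      (MeasurableEquiv.toLp 2 (Fin n → ℝ)).symm ⁻¹' (Set.univ.pi fun i => Set.Ico (a i) (b i)) := by
  ext x
  simp [Set.mem_pi, MeasurableEquiv.coe_toLp_symm]

lemma measurableSet_coordBox (a b : Fin n → ℝ) :
    MeasurableSet {x : EuclideanSpace ℝ (Fin n) | ∀ i, x i ∈ Set.Ico (a i) (b i)} := by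
  rw [coordBox_eq]
  exact (MeasurableEquiv.toLp 2 (Fin n → ℝ)).symm.measurable (MeasurableSet.univ_pi
    fun i => measurableSet_Ico)

lemma volume_coordBox (a b : Fin n → ℝ) :
    volume {x : EuclideanSpace ℝ (Fin n) | ∀ i, x i ∈ Set.Ico (a i) (b i)} =
      ∏ i, ENNReal.ofReal (b i - a i) := by
  rw [coordBox_eq, (EuclideanSpace.volume_preserving_symm_measurableEquiv_toLp (Fin n)).measure_preimage
    ((MeasurableSet.univ_pi fun i => measurableSet_Ico).nullMeasurableSet)]
  rw [volume_pi_pi]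
  simp [Real.volume_Ico]

lemma key (n : ℕ) (C : Set (EuclideanSpace ℝ (Fin n))) (hCb : IsBounded C)
    (hCm : MeasurableSet C) (k : ℕ) :
    (pack n ((2:ℝ)^k • unitCube n) : ℝ≥0∞) * volume C ≤
      (pack n C : ℝ≥0∞) * (ENNReal.ofReal ((2:ℝ)^k + 2)) ^ n := by
  classical
  set s : ℝ := (2:ℝ)^k with hs_def
  have hs : 0 < s := by positivity
  set L : ℝ := s + 2 with hL_def
  have hL : 0 < L := by positivity
  set Q := s • unitCube n with hQ_def
  have hQb : IsBounded Q := isBounded_smul_unitCube s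
  have hpackQ : pack n Q ∈ packSet n Q := by
    rw [pack_def]
    exact Nat.sSup_mem ⟨0, zero_mem_packSet Q⟩ (bddAbove_packSet hQb)
  obtain ⟨X, hXQ, hXsep, hXcard⟩ := hpackQ
  have hXcoord : ∀ p ∈ X, ∀ i, 0 ≤ p i ∧ p i ≤ s := fun p hp i =>
    mem_smul_unitCube hs (hXQ hp) i
  obtain ⟨R, hR⟩ := hCb.subset_closedBall 0
  have hCcoord : ∀ c ∈ C, ∀ i, |c i| ≤ R := by
    intro c hc i
    have h1 : dist (c i) ((0 : EuclideanSpace ℝ (Fin n)) i) ≤ dist c 0 := coord_dist_le c 0 i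
    have h2 : dist c 0 ≤ R := Metric.mem_closedBall.mp (hR hc)
    have h0 : (0 : EuclideanSpace ℝ (Fin n)) i = 0 := rfl
    rw [h0, Real.dist_eq, sub_zero] at h1
    linarith
  set M : ℤ := ⌈(R + s) / L⌉ + 1 with hM_def
  set V : Finset (Fin n → ℤ) := Fintype.piFinset fun _ : Fin n => Finset.Icc (-M) M with hV_def
  set w : (Fin n → ℤ) → EuclideanSpace ℝ (Fin n) := fun v => WithLp.toLp 2 (fun i => L * (v i : ℝ)) with hw_def
  set A : EuclideanSpace ℝ (Fin n) → (Fin n → ℤ) → Set (EuclideanSpace ℝ (Fin n)) :=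
    fun p v => {x | ∀ i, x i ∈ Set.Ico (p i + L * (v i : ℝ)) (p i + L * (v i : ℝ) + L)}
    with hA_def
  set box0 : Set (EuclideanSpace ℝ (Fin n)) :=
    {x | ∀ i, x i ∈ Set.Ico (0 : ℝ) (0 + L)} with hbox0_def
  have hbox0m : MeasurableSet box0 := measurableSet_coordBox (fun _ => 0) (fun _ => 0 + L)
  have hAm : ∀ p v, MeasurableSet (A p v) := fun p v =>
    measurableSet_coordBox (fun i => p i + L * (v i : ℝ)) (fun i => p i + L * (v i : ℝ) + L)
  -- coordinates of sums
  have hadd : ∀ (p : EuclideanSpace ℝ (Fin n)) (v : Fin n → ℤ)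
      (y : EuclideanSpace ℝ (Fin n)) (i : Fin n),
      ((p + w v) + y) i = p i + L * (v i : ℝ) + y i := fun p v y i => rfl
  -- Claim 1: cover
  have hcover : ∀ p ∈ X, C ⊆ ⋃ v ∈ V, A p v := by
    intro p hp c hc
    set v : Fin n → ℤ := fun i => ⌊(c i - p i) / L⌋ with hv_def
    have hvmem : ∀ i, c i ∈ Set.Ico (p i + L * (v i : ℝ)) (p i + L * (v i : ℝ) + L) := by
      intro i
      have h1 : ((v i : ℝ)) * L ≤ c i - p i := (le_div_iff₀ hL).mp (Int.floor_le _)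
      have h2 : c i - p i < ((v i : ℝ) + 1) * L := (div_lt_iff₀ hL).mp (Int.lt_floor_add_one _)
      constructor
      · nlinarith
      · nlinarith
    have hvV : v ∈ V := by
      rw [hV_def, Fintype.mem_piFinset]
      intro i
      rw [Finset.mem_Icc]
      have hci := hCcoord c hc i
      have hpi := hXcoord p hp i
      have hbound : |c i - p i| ≤ R + s := by
        rw [abs_sub_le_iff]
        constructor <;>
          · cases' abs_le.mp hci with h1 h2; cases' hpi with h3 h4; linarith
      have habs := abs_le.mp hbound
      have hceil : (R + s) / L ≤ (⌈(R + s) / L⌉ : ℝ) := Int.le_ceil _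
      have h1 : (v i : ℝ) ≤ (c i - p i) / L := Int.floor_le _
      have h2 : (c i - p i) / L < (v i : ℝ) + 1 := Int.lt_floor_add_one _
      have hdivu : (c i - p i) / L ≤ (R + s) / L := by gcongr; exact habs.2
      have hdivl : (-(R + s)) / L ≤ (c i - p i) / L := by gcongr; exact habs.1
      rw [neg_div] at hdivl
      constructor
      · have : ((-M : ℤ) : ℝ) < (v i : ℝ) := by
          push_cast [hM_def]
          linarith
        exact_mod_cast this.le
      · have : (v i : ℝ) ≤ ((M : ℤ) : ℝ) := by
          push_cast [hM_def]
          linarith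
        exact_mod_cast this
    exact Set.mem_biUnion hvV hvmem
  -- Claim 2: disjointness
  have hdisj : ∀ p : EuclideanSpace ℝ (Fin n),
      (↑V : Set (Fin n → ℤ)).PairwiseDisjoint (fun v => C ∩ A p v) := by
    intro p v _ v' _ hvv'
    refine Set.disjoint_left.mpr ?_
    rintro x ⟨-, hx⟩ ⟨-, hx'⟩
    obtain ⟨i, hi⟩ := Function.ne_iff.mp hvv'
    rcases lt_or_gt_of_ne hi with h | h
    · have h1 := (hx i).2
      have h2 := (hx' i).1
      have h3 : ((v i : ℝ) + 1) ≤ (v' i : ℝ) := by exact_mod_cast Int.add_one_le_iff.mpr h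
      nlinarith
    · have h1 := (hx' i).2
      have h2 := (hx i).1
      have h3 : ((v' i : ℝ) + 1) ≤ (v i : ℝ) := by exact_mod_cast Int.add_one_le_iff.mpr h
      nlinarith
  -- Claim 3: decomposition of the volume of C
  have hsum : ∀ p ∈ X, volume C = ∑ v ∈ V, volume (C ∩ A p v) := by
    intro p hp
    have hC_eq : C = ⋃ v ∈ V, C ∩ A p v := by
      apply Set.Subset.antisymm
      · intro c hc
        obtain ⟨v, hvV, hv⟩ := Set.mem_iUnion₂.mp (hcover p hp hc)
        exact Set.mem_iUnion₂.mpr ⟨v, hvV, hc, hv⟩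
      · exact Set.iUnion₂_subset fun v _ => Set.inter_subset_left
    conv_lhs => rw [hC_eq]
    exact measure_biUnion_finset (hdisj p) (fun v _ => hCm.inter (hAm p v))
  -- Claim 4: translation invariance
  have htrans : ∀ (p : EuclideanSpace ℝ (Fin n)) (v : Fin n → ℤ), volume (C ∩ A p v) =
      volume (((fun y => (p + w v) + y) ⁻¹' C) ∩ box0) := by
    intro p v
    have hpre : (fun y => (p + w v) + y) ⁻¹' (C ∩ A p v) =
        ((fun y => (p + w v) + y) ⁻¹' C) ∩ box0 := by
      ext y
      simp only [Set.mem_preimage, Set.mem_inter_iff, Set.mem_setOf_eq, hA_def, hbox0_def,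
        Set.mem_Ico]
      constructor
      · rintro ⟨h1, h2⟩
        refine ⟨h1, fun i => ?_⟩
        have h3 := h2 i
        rw [hadd p v y i] at h3
        exact ⟨by linarith [h3.1], by linarith [h3.2]⟩
      · rintro ⟨h1, h2⟩
        refine ⟨h1, fun i => ?_⟩
        have h3 := h2 i
        rw [hadd p v y i]
        exact ⟨by linarith [h3.1], by linarith [h3.2]⟩
    rw [← measure_preimage_add volume (p + w v) (C ∩ A p v), hpre]
  -- the translated pieces
  set T : EuclideanSpace ℝ (Fin n) × (Fin n → ℤ) → Set (EuclideanSpace ℝ (Fin n)) :=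
    fun q => ((fun y => (q.1 + w q.2) + y) ⁻¹' C) ∩ box0 with hT_def
  have hTm : ∀ q, MeasurableSet (T q) := fun q =>
    ((measurable_const_add (q.1 + w q.2)) hCm).inter hbox0m
  -- separation of the translate labels
  have hsep2 : ∀ q ∈ X ×ˢ V, ∀ q' ∈ X ×ˢ V, q ≠ q' →
      2 ≤ dist (q.1 + w q.2) (q'.1 + w q'.2) := by
    rintro ⟨p, v⟩ hq ⟨p', v'⟩ hq' hne
    rw [Finset.mem_product] at hq hq'
    by_cases hv : v = v'
    · subst hv
      have hpp' : p ≠ p' := by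
        rintro rfl; exact hne rfl
      rw [dist_add_right]
      exact hXsep p hq.1 p' hq'.1 hpp'
    · obtain ⟨i, hi⟩ := Function.ne_iff.mp hv
      have hd : dist ((p + w v) i) ((p' + w v') i) ≤ dist (p + w v) (p' + w v') :=
        coord_dist_le _ _ i
      have e1 : (p + w v) i = p i + L * (v i : ℝ) := rfl
      have e2 : (p' + w v') i = p' i + L * (v' i : ℝ) := rfl
      rw [e1, e2, Real.dist_eq] at hd
      have hvv : (1 : ℝ) ≤ |(v i : ℝ) - (v' i : ℝ)| := by
        have := Int.one_le_abs (sub_ne_zero.mpr hi)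
        exact_mod_cast this
      have hp1 := hXcoord p hq.1 i
      have hp2 := hXcoord p' hq'.1 i
      have h3 : |p i - p' i| ≤ s := abs_sub_le_iff.mpr ⟨by linarith [hp1.1, hp1.2, hp2.1, hp2.2],
        by linarith [hp1.1, hp1.2, hp2.1, hp2.2]⟩
      have h1 : |L * ((v i : ℝ) - v' i)| = L * |(v i : ℝ) - v' i| := by
        rw [abs_mul, abs_of_pos hL]
      have h2 : L * 1 ≤ L * |(v i : ℝ) - v' i| := mul_le_mul_of_nonneg_left hvv hL.le
      have h4 : |L * ((v i : ℝ) - v' i)| ≤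
          |(p i + L * v i) - (p' i + L * v' i)| + |p i - p' i| := by
        have he : L * ((v i : ℝ) - v' i) =
            ((p i + L * v i) - (p' i + L * v' i)) - (p i - p' i) := by ring
        rw [he]
        exact abs_sub _ _
      have : 2 ≤ |(p i + L * (v i : ℝ)) - (p' i + L * (v' i : ℝ))| := by
        rw [h1] at h4
        have hLs : L = s + 2 := hL_def
        linarith
      linarith
  -- multiplicity bound
  have hmult : ∀ y, ∑ q ∈ X ×ˢ V, (T q).indicator (1 : EuclideanSpace ℝ (Fin n) → ℝ≥0∞) y ≤
      box0.indicator (fun _ => (pack n C : ℝ≥0∞)) y := by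
    intro y
    by_cases hy : y ∈ box0
    · rw [Set.indicator_of_mem hy]
      have hsum_eq : ∑ q ∈ X ×ˢ V, (T q).indicator (1 : EuclideanSpace ℝ (Fin n) → ℝ≥0∞) y =
          (((X ×ˢ V).filter (fun q => y ∈ T q)).card : ℝ≥0∞) := by
        rw [← Finset.sum_boole]
        apply Finset.sum_congr rfl
        intro q _
        rw [Set.indicator_apply]
        split_ifs <;> simp
      rw [hsum_eq]
      set G := (X ×ˢ V).filter (fun q => y ∈ T q) with hG_def
      set φ : EuclideanSpace ℝ (Fin n) × (Fin n → ℤ) → EuclideanSpace ℝ (Fin n) :=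
        fun q => (q.1 + w q.2) + y with hφ_def
      have hGmem : ∀ q ∈ G, q ∈ X ×ˢ V := fun q hq => Finset.mem_of_mem_filter q hq
      have hinj : Set.InjOn φ ↑G := by
        intro q hq q' hq' heq
        by_contra hne
        have h2 := hsep2 q (hGmem q (Finset.mem_coe.mp hq)) q' (hGmem q' (Finset.mem_coe.mp hq')) hne
        have h3 : dist (q.1 + w q.2) (q'.1 + w q'.2) = 0 := by
          rw [← dist_add_right (q.1 + w q.2) (q'.1 + w q'.2) y]
          rw [show (q.1 + w q.2) + y = φ q from rfl, show (q'.1 + w q'.2) + y = φ q' from rfl, heq,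
            dist_self]
        rw [h3] at h2
        linarith
      set Y := G.image φ with hY_def
      have hYcard : Y.card = G.card := Finset.card_image_of_injOn hinj
      have hYC : ↑Y ⊆ C := by
        intro x hx
        obtain ⟨q, hq, rfl⟩ := Finset.mem_image.mp (Finset.mem_coe.mp hx)
        exact ((Finset.mem_filter.mp hq).2).1
      have hYsep : ∀ x ∈ Y, ∀ x' ∈ Y, x ≠ x' → 2 ≤ dist x x' := by
        intro x hx x' hx' hne
        obtain ⟨q, hq, rfl⟩ := Finset.mem_image.mp hx
        obtain ⟨q', hq', rfl⟩ := Finset.mem_image.mp hx'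
        have hqq' : q ≠ q' := by rintro rfl; exact hne rfl
        have := hsep2 q (hGmem q hq) q' (hGmem q' hq') hqq'
        rw [show φ q = (q.1 + w q.2) + y from rfl, show φ q' = (q'.1 + w q'.2) + y from rfl,
          dist_add_right]
        exact this
      have hle : Y.card ≤ pack n C := by
        rw [pack_def]
        exact le_csSup (bddAbove_packSet hCb) ⟨Y, hYC, hYsep, rfl⟩
      have : G.card ≤ pack n C := hYcard ▸ hle
      exact_mod_cast this
    · have hzero : ∀ q ∈ X ×ˢ V, (T q).indicator (1 : EuclideanSpace ℝ (Fin n) → ℝ≥0∞) y = 0 := by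
        intro q _
        exact Set.indicator_of_notMem (fun hmem => hy hmem.2) _
      rw [Finset.sum_eq_zero hzero]
      exact zero_le
  -- summing up
  have hsum_le : ∑ q ∈ X ×ˢ V, volume (T q) ≤ (pack n C : ℝ≥0∞) * volume box0 := by
    have h1 : ∀ q ∈ X ×ˢ V, volume (T q) = ∫⁻ y, (T q).indicator (1 : EuclideanSpace ℝ (Fin n) → ℝ≥0∞) y := fun q _ =>
      (lintegral_indicator_one (hTm q)).symm
    rw [Finset.sum_congr rfl h1,
      ← lintegral_finset_sum _ (fun q _ => measurable_one.indicator (hTm q))]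
    calc ∫⁻ y, ∑ q ∈ X ×ˢ V, (T q).indicator (1 : EuclideanSpace ℝ (Fin n) → ℝ≥0∞) y
        ≤ ∫⁻ y, box0.indicator (fun _ => (pack n C : ℝ≥0∞)) y := lintegral_mono hmult
      _ = (pack n C : ℝ≥0∞) * volume box0 := lintegral_indicator_const hbox0m _
  have hbox0vol : volume box0 = (ENNReal.ofReal L) ^ n := by
    rw [hbox0_def, volume_coordBox]
    simp
  have hvolsum : (pack n Q : ℝ≥0∞) * volume C = ∑ q ∈ X ×ˢ V, volume (T q) := by
    rw [← hXcard]
    calc (X.card : ℝ≥0∞) * volume C = ∑ _p ∈ X, volume C := by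
          rw [Finset.sum_const, nsmul_eq_mul]
      _ = ∑ p ∈ X, ∑ v ∈ V, volume (C ∩ A p v) := Finset.sum_congr rfl (fun p hp => hsum p hp)
      _ = ∑ p ∈ X, ∑ v ∈ V, volume (T (p, v)) := by
          apply Finset.sum_congr rfl
          intro p _
          exact Finset.sum_congr rfl (fun v _ => htrans p v)
      _ = ∑ q ∈ X ×ˢ V, volume (T q) := by rw [Finset.sum_product]
  rw [hvolsum, ← hbox0vol]
  exact hsum_le

end PackAux

/-- `pack` satisfies the Euclidean bound:
`pack(C) ≥ δ_{pack,n}·L_n(C)` for every bounded Borel `C ⊆ ℝ^n`. -/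
theorem pack_euclidean_bound (n : ℕ) (hn : 1 ≤ n)
    (C : Set (EuclideanSpace ℝ (Fin n))) (hCb : IsBounded C) (hCm : MeasurableSet C) :
    packDensity n * (volume C).toReal ≤ (pack n C : ℝ) := by
  rcases eq_or_lt_of_le (ENNReal.toReal_nonneg : (0:ℝ) ≤ (volume C).toReal) with hc0 | hc0
  · rw [← hc0, mul_zero]
    exact Nat.cast_nonneg _
  set c : ℝ := (volume C).toReal with hc_def
  set P : ℝ := (pack n C : ℝ) with hP_def
  have hP0 : 0 ≤ P := Nat.cast_nonneg _
  -- real version of the key inequality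
  have hkeyR : ∀ k : ℕ, (pack n ((2:ℝ)^k • unitCube n) : ℝ) * c ≤ P * ((2:ℝ)^k + 2)^n := by
    intro k
    have h := PackAux.key n C hCb hCm k
    have hfin : (pack n C : ℝ≥0∞) * (ENNReal.ofReal ((2:ℝ)^k + 2)) ^ n ≠ ⊤ :=
      ENNReal.mul_ne_top (ENNReal.natCast_ne_top _) (ENNReal.pow_ne_top ENNReal.ofReal_ne_top)
    have h2 := ENNReal.toReal_mono hfin h
    rw [ENNReal.toReal_mul, ENNReal.toReal_mul, ENNReal.toReal_pow, ENNReal.toReal_natCast,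
      ENNReal.toReal_natCast, ENNReal.toReal_ofReal (by positivity)] at h2
    exact h2
  have hag : ∀ k : ℕ, (pack n ((2 : ℝ) ^ k • unitCube n) : ℝ) / 2 ^ (k * n) ≤
      (P / c) * (((2:ℝ)^k + 2) / 2^k)^n := by
    intro k
    have hpk : (0:ℝ) < (2:ℝ)^k := by positivity
    have hpkn : (0:ℝ) < ((2:ℝ)^k)^n := by positivity
    have hkey := hkeyR k
    have hgk : (P / c) * (((2:ℝ)^k + 2) / 2^k)^n
        = P * ((2:ℝ)^k + 2)^n / (c * ((2:ℝ)^k)^n) := by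
      rw [div_pow]
      field_simp
    rw [hgk, pow_mul, div_le_div_iff₀ hpkn (by positivity)]
    have h3 := mul_le_mul_of_nonneg_right hkey hpkn.le
    calc (pack n ((2 : ℝ) ^ k • unitCube n) : ℝ) * (c * ((2:ℝ)^k)^n)
        = ((pack n ((2 : ℝ) ^ k • unitCube n) : ℝ) * c) * ((2:ℝ)^k)^n := by ring
      _ ≤ (P * ((2:ℝ)^k + 2)^n) * ((2:ℝ)^k)^n := h3
  have hg_tendsto : Tendsto (fun k : ℕ => (P / c) * (((2:ℝ)^k + 2) / 2^k)^n) atTop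
      (nhds (P / c)) := by
    have h1 : Tendsto (fun k : ℕ => ((2:ℝ)^k + 2) / 2^k) atTop (nhds 1) := by
      have he : (fun k : ℕ => ((2:ℝ)^k + 2) / 2^k) = fun k : ℕ => 1 + 2 * (1/2:ℝ)^k := by
        funext k
        have hpk : (0:ℝ) < (2:ℝ)^k := by positivity
        rw [div_pow]
        field_simp
        ring
      rw [he]
      have h2 : Tendsto (fun k : ℕ => (1/2:ℝ)^k) atTop (nhds 0) :=
        tendsto_pow_atTop_nhds_zero_of_lt_one (by norm_num) (by norm_num)
      have := (h2.const_mul (2:ℝ)).const_add (1:ℝ)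
      simpa using this
    have h2 : Tendsto (fun k : ℕ => (((2:ℝ)^k + 2) / 2^k)^n) atTop (nhds 1) := by
      have := h1.pow n
      simpa using this
    have := h2.const_mul (P / c)
    simpa using this
  have hlimsup : packDensity n ≤ P / c := by
    have hcb : IsCoboundedUnder (· ≤ ·) atTop
        (fun k : ℕ => (pack n ((2 : ℝ) ^ k • unitCube n) : ℝ) / 2 ^ (k * n)) :=
      isCoboundedUnder_le_of_le atTop (x := 0) (fun k => by positivity)
    have hbd : IsBoundedUnder (· ≤ ·) atTop
        (fun k : ℕ => (P / c) * (((2:ℝ)^k + 2) / 2^k)^n) :=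
      hg_tendsto.isBoundedUnder_le
    have h1 := limsup_le_limsup (Eventually.of_forall hag) hcb hbd
    rw [hg_tendsto.limsup_eq] at h1
    exact h1
  calc packDensity n * c ≤ (P / c) * c := mul_le_mul_of_nonneg_right hlimsup hc0.le
    _ = P := by field_simp
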